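/- (Decomposability of the nuclear norm over orthogonal subspaces.) Let U ⊆ ℝ^p be a subspace, and let A, B be real symmetric p×p matrices such that the column space of A is contained in U and the column space of B is contained in U^⊥. Then the nuclear norm is additive: ‖A + B‖_* = ‖A‖_* + ‖B‖_*, where ‖·‖_* denotes the nuclear norm, i.e., the sum of singular values (equivalently, for a symmetric matrix, the sum of the absolute values of its eigenvalues). -/

import Mathlib

open Matrix
open scoped MatrixOrder

/-- The (unordered) singular values of a square real matrix: the square roots of the
eigenvalues of `Aᵀ A`. -/
noncomputable def sval {m : Type*} [Fintype m] [DecidableEq m] (A : Matrix m m ℝ) : m → ℝ :=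
  fun i => Real.sqrt ((show (Aᵀ * A).IsHermitian by
    simpa [Matrix.conjTranspose_eq_transpose_of_trivial] using
      Matrix.isHermitian_conjTranspose_mul_self A).eigenvalues i)

/-- Nuclear norm: the sum of the singular values. -/
noncomputable def nuclearNorm {m : Type*} [Fintype m] [DecidableEq m] (A : Matrix m m ℝ) : ℝ :=
  ∑ i, sval A i

/-- A real matrix with `M * Mᵀ = 0` is zero. -/
lemma aux_eq_zero_of_mul_transpose {m : Type*} [Fintype m] {M : Matrix m m ℝ}
    (h : M * Mᵀ = 0) : M = 0 := by
  ext i j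
  have hii : (M * Mᵀ) i i = 0 := by rw [h]; rfl
  rw [Matrix.mul_apply] at hii
  simp only [Matrix.transpose_apply] at hii
  have := (Finset.sum_eq_zero_iff_of_nonneg (fun k _ => mul_self_nonneg (M i k))).mp hii
    j (Finset.mem_univ j)
  simpa using mul_self_eq_zero.mp this

/-- The trace of the PSD square root is the sum of the square roots of the eigenvalues. -/
lemma aux_trace_sqrt {m : Type*} [Fintype m] [DecidableEq m] {M : Matrix m m ℝ}
    (hM : M.PosSemidef) : (CFC.sqrt M).trace = ∑ i, Real.sqrt (hM.1.eigenvalues i) := by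
  rw [CFC.sqrt_eq_cfc, cfc_nnreal_eq_real _ M (nonneg_iff_posSemidef.mpr hM), hM.1.cfc_eq,
    IsHermitian.cfc, Unitary.conjStarAlgAut_apply, Matrix.trace_mul_cycle,
    Unitary.coe_star_mul_self, one_mul, Matrix.trace_diagonal]
  simp [max_eq_left (hM.eigenvalues_nonneg _)]

lemma aux_nuclearNorm_eq_trace {m : Type*} [Fintype m] [DecidableEq m] (M : Matrix m m ℝ) :
    nuclearNorm M = (CFC.sqrt (Mᴴ * M)).trace := by
  rw [aux_trace_sqrt (Matrix.posSemidef_conjTranspose_mul_self M)]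
  rfl

/-- **decomposability of the nuclear norm over orthogonal subspaces.**
If `A`, `B` are real symmetric `p × p` matrices whose column spaces are contained in a
subspace `U` of `ℝ^p` and in `U^⊥`, respectively, then `‖A + B‖_* = ‖A‖_* + ‖B‖_*`. -/
theorem stmt_17 (p : ℕ) (U : Submodule ℝ (EuclideanSpace ℝ (Fin p)))
    (A B : Matrix (Fin p) (Fin p) ℝ) (hA : A.IsSymm) (hB : B.IsSymm)
    (hAU : LinearMap.range (Matrix.toEuclideanLin A) ≤ U)
    (hBU : LinearMap.range (Matrix.toEuclideanLin B) ≤ Uᗮ) :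
    nuclearNorm (A + B) = nuclearNorm A + nuclearNorm B := by
  -- columns of A lie in U, columns of B lie in Uᗮ
  have hcolA : ∀ j, ((WithLp.equiv 2 (Fin p → ℝ)).symm (fun i => A i j)) ∈ U := by
    intro j
    have : Matrix.toEuclideanLin A ((WithLp.equiv 2 (Fin p → ℝ)).symm (Pi.single j 1))
        = (WithLp.equiv 2 (Fin p → ℝ)).symm (fun i => A i j) := by
      rw [WithLp.equiv_symm_apply, Matrix.toEuclideanLin_toLp]
      congr 1
      simp [Matrix.mulVec_single]; rfl
    exact this ▸ hAU (LinearMap.mem_range_self _ _)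
  have hcolB : ∀ j, ((WithLp.equiv 2 (Fin p → ℝ)).symm (fun i => B i j)) ∈ Uᗮ := by
    intro j
    have : Matrix.toEuclideanLin B ((WithLp.equiv 2 (Fin p → ℝ)).symm (Pi.single j 1))
        = (WithLp.equiv 2 (Fin p → ℝ)).symm (fun i => B i j) := by
      rw [WithLp.equiv_symm_apply, Matrix.toEuclideanLin_toLp]
      congr 1
      simp [Matrix.mulVec_single]; rfl
    exact this ▸ hBU (LinearMap.mem_range_self _ _)
  -- A * B = 0
  have hAB : A * B = 0 := by
    ext i j
    have hinner := Submodule.inner_right_of_mem_orthogonal (𝕜 := ℝ) (hcolA i) (hcolB j)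
    rw [PiLp.inner_apply] at hinner
    simp only [RCLike.inner_apply, starRingEnd_apply, star_trivial] at hinner
    have hsym : ∀ k, A i k = A k i := fun k => by
      conv_lhs => rw [← hA]
      rfl
    rw [Matrix.mul_apply]
    simp only [Matrix.zero_apply]
    calc ∑ k, A i k * B k j = ∑ k, A k i * B k j := by
          exact Finset.sum_congr rfl fun k _ => by rw [hsym k]
      _ = 0 := by simpa only [WithLp.equiv_symm_apply, WithLp.ofLp_toLp, mul_comm] using hinner
  have hBA : B * A = 0 := by
    have := congrArg Matrix.transpose hAB
    rwa [Matrix.transpose_mul, hB, hA, Matrix.transpose_zero] at this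
  -- square roots
  set SA := CFC.sqrt (Aᴴ * A) with hSA
  set SB := CFC.sqrt (Bᴴ * B) with hSB
  have hSAsq : SA * SA = Aᴴ * A :=
    CFC.sqrt_mul_sqrt_self _ (nonneg_iff_posSemidef.mpr (Matrix.posSemidef_conjTranspose_mul_self A))
  have hSBsq : SB * SB = Bᴴ * B :=
    CFC.sqrt_mul_sqrt_self _ (nonneg_iff_posSemidef.mpr (Matrix.posSemidef_conjTranspose_mul_self B))
  have hSApsd := (CFC.sqrt_nonneg (Aᴴ * A)).posSemidef
  have hSBpsd := (CFC.sqrt_nonneg (Bᴴ * B)).posSemidef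
  have hSAh : SAᴴ = SA := hSApsd.1
  have hSBh : SBᴴ = SB := hSBpsd.1
  have hconjA : Aᴴ = A := by rw [Matrix.conjTranspose_eq_transpose_of_trivial, hA]
  have hconjB : Bᴴ = B := by rw [Matrix.conjTranspose_eq_transpose_of_trivial, hB]
  -- A² B² = 0 and B² A² = 0
  have hA2B2 : (Aᴴ * A) * (Bᴴ * B) = 0 := by
    rw [hconjA, hconjB]
    calc A * A * (B * B) = A * (A * B) * B := by noncomm_ring
      _ = 0 := by rw [hAB]; simp
  have hB2A2 : (Bᴴ * B) * (Aᴴ * A) = 0 := by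
    rw [hconjA, hconjB]
    calc B * B * (A * A) = B * (B * A) * A := by noncomm_ring
      _ = 0 := by rw [hBA]; simp
  -- B² * SA = 0, hence SA * B² = 0
  have h1 : (Bᴴ * B) * SA = 0 := by
    apply aux_eq_zero_of_mul_transpose
    have hSAt : SAᵀ = SA := by
      rw [← Matrix.conjTranspose_eq_transpose_of_trivial, hSAh]
    have hB2t : ((Bᴴ * B) * SA)ᵀ = SA * (Bᴴ * B) := by
      rw [Matrix.transpose_mul, hSAt, ← Matrix.conjTranspose_eq_transpose_of_trivial,
        Matrix.conjTranspose_mul, Matrix.conjTranspose_conjTranspose]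
    rw [hB2t]
    calc (Bᴴ * B) * SA * (SA * (Bᴴ * B)) = (Bᴴ * B) * (SA * SA) * (Bᴴ * B) := by noncomm_ring
      _ = (Bᴴ * B) * (Aᴴ * A) * (Bᴴ * B) := by rw [hSAsq]
      _ = 0 := by rw [hB2A2]; simp
  have h2 : SA * (Bᴴ * B) = 0 := by
    have := congrArg Matrix.conjTranspose h1
    rwa [Matrix.conjTranspose_mul, hSAh, Matrix.conjTranspose_mul,
      Matrix.conjTranspose_conjTranspose, Matrix.conjTranspose_zero] at this
  -- SA * SB = 0 and SB * SA = 0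
  have h3 : SA * SB = 0 := by
    apply aux_eq_zero_of_mul_transpose
    have hSBt : SBᵀ = SB := by
      rw [← Matrix.conjTranspose_eq_transpose_of_trivial, hSBh]
    have hSAt : SAᵀ = SA := by
      rw [← Matrix.conjTranspose_eq_transpose_of_trivial, hSAh]
    rw [Matrix.transpose_mul, hSBt, hSAt]
    calc SA * SB * (SB * SA) = SA * (SB * SB) * SA := by noncomm_ring
      _ = SA * (Bᴴ * B) * SA := by rw [hSBsq]
      _ = 0 := by rw [h2]; simp
  have h4 : SB * SA = 0 := by
    have := congrArg Matrix.conjTranspose h3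
    rwa [Matrix.conjTranspose_mul, hSAh, hSBh, Matrix.conjTranspose_zero] at this
  -- (SA + SB)² = (A+B)ᴴ (A+B)
  have hsq : (SA + SB) ^ 2 = (A + B)ᴴ * (A + B) := by
    have : (A + B)ᴴ * (A + B) = Aᴴ * A + Aᴴ * B + Bᴴ * A + Bᴴ * B := by
      rw [Matrix.conjTranspose_add]; noncomm_ring
    rw [this, hconjA, hconjB, hAB, hBA]
    calc (SA + SB) ^ 2 = SA * SA + SA * SB + SB * SA + SB * SB := by noncomm_ring
      _ = Aᴴ * A + 0 + 0 + Bᴴ * B := by rw [hSAsq, hSBsq, h3, h4]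
      _ = A * A + 0 + 0 + B * B := by rw [hconjA, hconjB]
  have hsum : SA + SB = CFC.sqrt ((A + B)ᴴ * (A + B)) :=
    (CFC.sqrt_unique (by rw [← sq]; exact hsq) (nonneg_iff_posSemidef.mpr (hSApsd.add hSBpsd))).symm
  rw [aux_nuclearNorm_eq_trace, aux_nuclearNorm_eq_trace, aux_nuclearNorm_eq_trace,
    ← hsum, Matrix.trace_add]
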